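/- Let (X,d) be a T₁ quasi-metric space (with forward topology normal). Then (X,d) is a UC space if and only if every sequence (x_n) in X with I⁺(x_n)→0 has a cluster point in (X,d), where I⁺(x)=d(x, X∖{x}) is the isolation functional. -/
import Mathlib


open Filter Topology Set

structure IsQuasiMetric {X : Type*} (d : X → X → ℝ) : Prop where
  nonneg : ∀ x y, 0 ≤ d x y
  refl : ∀ x, d x x = 0
  eq_of_both_zero : ∀ x y, d x y = 0 → d y x = 0 → x = y
  triangle : ∀ x y z, d x y ≤ d x z + d z y

/-- The forward topology generated by forward balls `B⁺(x,ε) = {y | d x y < ε}`. -/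
def forwardTopology {X : Type*} (d : X → X → ℝ) : TopologicalSpace X :=
  TopologicalSpace.generateFrom {S | ∃ x : X, ∃ ε : ℝ, 0 < ε ∧ S = {y | d x y < ε}}

/-- `s` forward converges to `x`: `d x (s n) → 0`. -/
def ForwardConv {X : Type*} (d : X → X → ℝ) (s : ℕ → X) (x : X) : Prop :=
  ∀ ε > (0:ℝ), ∃ N : ℕ, ∀ n ≥ N, d x (s n) < ε

/-- `s` backward converges to `x`: `d (s n) x → 0`. -/
def BackwardConv {X : Type*} (d : X → X → ℝ) (s : ℕ → X) (x : X) : Prop :=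
  ∀ ε > (0:ℝ), ∃ N : ℕ, ∀ n ≥ N, d (s n) x < ε

/-- `x` is a cluster point of `s`: some subsequence forward converges to `x`. -/
def IsClusterPointOf {X : Type*} (d : X → X → ℝ) (s : ℕ → X) (x : X) : Prop :=
  ∃ φ : ℕ → ℕ, StrictMono φ ∧ ForwardConv d (s ∘ φ) x

def LeftKCauchy {X : Type*} (d : X → X → ℝ) (s : ℕ → X) : Prop :=
  ∀ ε > (0:ℝ), ∃ n₀ : ℕ, ∀ k n : ℕ, n₀ ≤ k → k ≤ n → d (s k) (s n) < ε

/-- `s` is forward parallel to `t`. -/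
def ForwardParallel {X : Type*} (d : X → X → ℝ) (s t : ℕ → X) : Prop :=
  ∀ ε > (0:ℝ), ∃ N : ℕ, ∀ n ≥ N, d (s n) (t n) < ε

/-- Forward continuity for real-valued functions (ε-δ form). -/
def ForwardContinuous {X : Type*} (d : X → X → ℝ) (f : X → ℝ) : Prop :=
  ∀ x₀ : X, ∀ ε > (0:ℝ), ∃ δ > (0:ℝ), ∀ y, d x₀ y < δ → |f x₀ - f y| < ε

/-- Uniform continuity for real-valued functions. -/
def UniformlyCont {X : Type*} (d : X → X → ℝ) (f : X → ℝ) : Prop :=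
  ∀ ε > (0:ℝ), ∃ δ > (0:ℝ), ∀ x y, d x y < δ → |f x - f y| < ε

/-- `(X,d)` is a UC quasi-metric space. -/
def IsUC {X : Type*} (d : X → X → ℝ) : Prop :=
  ∀ f : X → ℝ, ForwardContinuous d f → UniformlyCont d f

/-- Distance between two sets: `inf {d a b | a ∈ A, b ∈ B}`. -/
noncomputable def setDist {X : Type*} (d : X → X → ℝ) (A B : Set X) : ℝ :=
  sInf {r : ℝ | ∃ a ∈ A, ∃ b ∈ B, d a b = r}

/-- The isolation functional `I⁺(x) = d(x, X \ {x})`. -/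
noncomputable def isolation {X : Type*} (d : X → X → ℝ) (x : X) : ℝ :=
  sInf {r : ℝ | ∃ y : X, y ≠ x ∧ d x y = r}

namespace UCaux

variable {X : Type*} {d : X → X → ℝ}

/-- every open set in the forward topology contains a ball around each of its points -/
lemma ball_of_genOpen (hd : IsQuasiMetric d) {U : Set X}
    (hU : TopologicalSpace.GenerateOpen
      {S | ∃ x : X, ∃ ε : ℝ, 0 < ε ∧ S = {y | d x y < ε}} U) :
    ∀ x ∈ U, ∃ δ > (0:ℝ), ∀ y, d x y < δ → y ∈ U := by
  induction hU with
  | basic S hS =>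
    obtain ⟨c, ε, hε, rfl⟩ := hS
    intro x hx
    refine ⟨ε - d c x, by simpa using hx, fun y hy => ?_⟩
    have := hd.triangle c y x
    simp only [Set.mem_setOf_eq] at *
    linarith
  | univ => intro x _; exact ⟨1, one_pos, fun y _ => trivial⟩
  | inter U V _ _ ihU ihV =>
    intro x hx
    obtain ⟨δ1, hδ1, h1⟩ := ihU x hx.1
    obtain ⟨δ2, hδ2, h2⟩ := ihV x hx.2
    exact ⟨min δ1 δ2, lt_min hδ1 hδ2, fun y hy =>
      ⟨h1 y (hy.trans_le (min_le_left _ _)), h2 y (hy.trans_le (min_le_right _ _))⟩⟩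
  | sUnion S _ ih =>
    rintro x ⟨V, hV, hxV⟩
    obtain ⟨δ, hδ, h⟩ := ih V hV x hxV
    exact ⟨δ, hδ, fun y hy => ⟨V, hV, h y hy⟩⟩

lemma ball_of_open (hd : IsQuasiMetric d) {U : Set X}
    (hU : @IsOpen X (forwardTopology d) U) :
    ∀ x ∈ U, ∃ δ > (0:ℝ), ∀ y, d x y < δ → y ∈ U :=
  ball_of_genOpen hd hU

lemma isOpen_of_balls (hd : IsQuasiMetric d) {U : Set X}
    (h : ∀ x ∈ U, ∃ δ > (0:ℝ), ∀ y, d x y < δ → y ∈ U) :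
    @IsOpen X (forwardTopology d) U := by
  have : U = ⋃₀ {S | (∃ x : X, ∃ ε : ℝ, 0 < ε ∧ S = {y | d x y < ε}) ∧ S ⊆ U} := by
    ext p
    constructor
    · intro hp
      obtain ⟨δ, hδ, hball⟩ := h p hp
      exact ⟨{y | d p y < δ}, ⟨⟨p, δ, hδ, rfl⟩, fun y hy => hball y hy⟩,
        by simpa [hd.refl] using hδ⟩
    · rintro ⟨S, ⟨_, hSU⟩, hpS⟩; exact hSU hpS
  rw [this]
  exact TopologicalSpace.GenerateOpen.sUnion _ (fun S hS => .basic S hS.1)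

lemma isClosed_of_balls (hd : IsQuasiMetric d) {S : Set X}
    (h : ∀ z, (∀ ε > (0:ℝ), ∃ p ∈ S, d z p < ε) → z ∈ S) :
    @IsClosed X (forwardTopology d) S := by
  letI := forwardTopology d
  rw [← isOpen_compl_iff]
  apply isOpen_of_balls hd
  intro z hz
  by_contra hcon
  push_neg at hcon
  refine hz (h z fun ε hε => ?_)
  obtain ⟨y, hy1, hy2⟩ := hcon ε hε
  exact ⟨y, by simpa using hy2, hy1⟩

lemma eq_of_d_zero (hd : IsQuasiMetric d) (hT1 : @T1Space X (forwardTopology d))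
    {x y : X} (h : d x y = 0) : x = y := by
  by_contra hne
  letI := forwardTopology d
  obtain ⟨U, hUo, hxU, hyU⟩ := t1Space_iff_exists_open.mp hT1 hne
  obtain ⟨δ, hδ, hb⟩ := ball_of_open hd hUo x hxU
  exact hyU (hb y (by simpa [h] using hδ))

lemma fwdCont_of_continuous (hd : IsQuasiMetric d) {f : X → ℝ}
    (hf : Continuous[forwardTopology d, _] f) : ForwardContinuous d f := by
  letI := forwardTopology d
  intro x₀ ε hε
  have hU : @IsOpen X (forwardTopology d) (f ⁻¹' Metric.ball (f x₀) ε) :=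
    hf.isOpen_preimage _ Metric.isOpen_ball
  obtain ⟨δ, hδ, hb⟩ := ball_of_open hd hU x₀ (by simp [Metric.mem_ball, hε])
  refine ⟨δ, hδ, fun y hy => ?_⟩
  have := hb y hy
  simp only [Set.mem_preimage, Metric.mem_ball, Real.dist_eq] at this
  rw [abs_sub_comm]; exact this

lemma exists_strictMono {Q : ℕ → ℕ → Prop} (h : ∀ k N, ∃ n, N ≤ n ∧ Q k n) :
    ∃ φ : ℕ → ℕ, StrictMono φ ∧ ∀ k, Q k (φ k) := by
  choose g hg1 hg2 using h
  let φ : ℕ → ℕ := fun k => Nat.rec (g 0 0) (fun k ih => g (k+1) (ih+1)) k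
  have hstep : ∀ k, φ (k+1) = g (k+1) (φ k + 1) := fun k => rfl
  have hsm : StrictMono φ := strictMono_nat_of_lt_succ fun k => by
    rw [hstep]; exact lt_of_lt_of_le (Nat.lt_succ_self _) (hg1 (k+1) (φ k + 1))
  refine ⟨φ, hsm, fun k => ?_⟩
  cases k with
  | zero => exact hg2 0 0
  | succ k => rw [hstep]; exact hg2 (k+1) (φ k + 1)

lemma cluster_comp {s : ℕ → X} {g : ℕ → ℕ} {x : X} (hg : StrictMono g)
    (h : IsClusterPointOf d (s ∘ g) x) : IsClusterPointOf d s x := by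
  obtain ⟨ψ, hψ, hc⟩ := h
  exact ⟨g ∘ ψ, hg.comp hψ, hc⟩

lemma one_div_succ_le {K n : ℕ} (h : K ≤ n) : (1:ℝ)/(n+1) ≤ 1/(K+1) := by
  apply one_div_le_one_div_of_le <;> [positivity; exact_mod_cast by omega]

lemma one_div_succ_pos (n : ℕ) : (0:ℝ) < 1/(n+1) := by positivity

lemma value_finite (hd : IsQuasiMetric d) {u : ℕ → X}
    (h : ∀ z, ¬ IsClusterPointOf d u z) (v : X) : {n | u n = v}.Finite := by
  by_contra hinf
  have hinf' : {n | u n = v}.Infinite := hinf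
  have hub : ∀ k N : ℕ, ∃ n, N ≤ n ∧ u n = v := by
    intro k N
    by_contra hno
    push_neg at hno
    exact hinf' (Set.Finite.subset (Set.finite_Iio N) (fun n hn => by
      by_contra hlt
      exact hno n (by simpa using hlt) hn))
  obtain ⟨φ, hφ, hφv⟩ := exists_strictMono hub
  exact h v ⟨φ, hφ, fun ε hε => ⟨0, fun n _ => by
    simp [Function.comp, hφv n, hd.refl, hε]⟩⟩

lemma mem_finite (hd : IsQuasiMetric d) {u : ℕ → X}
    (h : ∀ z, ¬ IsClusterPointOf d u z) {F : Set X} (hF : F.Finite) :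
    {n | u n ∈ F}.Finite := by
  have : {n | u n ∈ F} = ⋃ v ∈ F, {n | u n = v} := by ext n; simp
  rw [this]
  exact hF.biUnion fun v _ => value_finite hd h v

lemma closed_subset_range (hd : IsQuasiMetric d)
    (h0 : ∀ x y : X, d x y = 0 → x = y) {u : ℕ → X}
    (h : ∀ z, ¬ IsClusterPointOf d u z) {S : Set X} (hS : S ⊆ Set.range u) :
    @IsClosed X (forwardTopology d) S := by
  apply isClosed_of_balls hd
  intro z hz
  by_contra hzS
  classical
  -- claim: arbitrarily far out, u gets arbitrarily close to z
  have claim : ∀ k N : ℕ, ∃ n, N ≤ n ∧ d z (u n) < 1/(k+1) := by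
    intro k N
    by_contra hno
    push_neg at hno
    set B : Finset ℕ := (Finset.range N).filter (fun n => u n ∈ S) with hB
    have hpos : ∀ n ∈ B, 0 < d z (u n) := by
      intro n hn
      rcases lt_or_eq_of_le (hd.nonneg z (u n)) with h' | h'
      · exact h'
      · have hzn : z = u n := h0 z (u n) h'.symm
        exact absurd (hzn ▸ (Finset.mem_filter.mp hn).2) hzS
    set ε₀ : ℝ := if hBne : B.Nonempty then min (1/(k+1)) (B.inf' hBne (fun n => d z (u n)))
      else 1/(k+1) with hε₀
    have hε₀pos : 0 < ε₀ := by
      rw [hε₀]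
      split
      · next hBne =>
        apply lt_min (one_div_succ_pos k)
        obtain ⟨m, hm, hmeq⟩ := B.exists_mem_eq_inf' hBne (fun n => d z (u n))
        rw [hmeq]; exact hpos m hm
      · exact one_div_succ_pos k
    obtain ⟨p, hpS, hpd⟩ := hz ε₀ hε₀pos
    obtain ⟨n, rfl⟩ := hS hpS
    rcases lt_or_ge n N with hn | hn
    · have hnB : n ∈ B := Finset.mem_filter.mpr ⟨Finset.mem_range.mpr hn, hpS⟩
      have : ε₀ ≤ d z (u n) := by
        rw [hε₀]
        have hBne : B.Nonempty := ⟨n, hnB⟩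
        simp only [dif_pos hBne]
        exact le_trans (min_le_right _ _) (Finset.inf'_le _ hnB)
      linarith
    · have : ε₀ ≤ 1/(k+1) := by
        rw [hε₀]; split
        · exact min_le_left _ _
        · exact le_refl _
      have := hno n hn
      linarith
  obtain ⟨φ, hφ, hφd⟩ := exists_strictMono claim
  refine h z ⟨φ, hφ, fun ε hε => ?_⟩
  obtain ⟨K, hK⟩ := exists_nat_one_div_lt hε
  exact ⟨K, fun n hn => lt_of_lt_of_le (hφd n) (le_trans (one_div_succ_le hn) (le_of_lt hK))⟩

end UCaux

theorem isUC_iff_isolation' {X : Type*} (d : X → X → ℝ) (hd : IsQuasiMetric d)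
    (hT1 : @T1Space X (forwardTopology d))
    (hN : @NormalSpace X (forwardTopology d)) :
    IsUC d ↔
      ∀ s : ℕ → X, (∀ ε > (0:ℝ), ∃ N : ℕ, ∀ n ≥ N, isolation d (s n) < ε) →
        ∃ x : X, IsClusterPointOf d s x := by
  classical
  have h0 : ∀ x y : X, d x y = 0 → x = y := fun x y h => UCaux.eq_of_d_zero hd hT1 h
  constructor
  · -- UC → cluster condition
    intro hUC s hs
    by_contra hnc
    push_neg at hnc
    -- pass to subsequence with isolation < 1/(k+1)
    obtain ⟨g, hg, hgiso⟩ := UCaux.exists_strictMono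
      (Q := fun k n => isolation d (s n) < 1/(k+1))
      (by
        intro k N
        obtain ⟨M, hM⟩ := hs (1/(k+1)) (UCaux.one_div_succ_pos k)
        exact ⟨max N M, le_max_left _ _, hM _ (le_max_right _ _)⟩)
    set t : ℕ → X := s ∘ g with ht
    have hnct : ∀ z, ¬ IsClusterPointOf d t z := fun z hz => hnc z (UCaux.cluster_comp hg hz)
    -- choose nearby distinct points
    have hy : ∀ k, ∃ y, y ≠ t k ∧ d (t k) y < 1/(k+1) := by
      intro k
      have hne : ∃ y : X, y ≠ t k := by
        by_contra hall
        push_neg at hall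
        refine hnc (t k) ⟨id, strictMono_id, fun ε hε => ⟨0, fun n _ => ?_⟩⟩
        simp only [Function.comp, id_eq]
        rw [hall (s n), hd.refl]
        exact hε
      have hne' : {r : ℝ | ∃ y, y ≠ t k ∧ d (t k) y = r}.Nonempty :=
        ⟨d (t k) hne.choose, hne.choose, hne.choose_spec, rfl⟩
      obtain ⟨r, ⟨y, hy1, rfl⟩, hr⟩ := exists_lt_of_csInf_lt hne' (hgiso k)
      exact ⟨y, hy1, hr⟩
    choose u hu1 hu2 using hy
    letI := forwardTopology d
    haveI := hT1
    haveI := hN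
    by_cases hcy : ∃ z, IsClusterPointOf d u z
    · -- Case 1 : u has a cluster point z
      obtain ⟨z, ψ, hψ, hconv⟩ := hcy
      set C : Set X := {p | (∃ k, p = t (ψ k)) ∧ p ≠ z} with hC
      have hCc : IsClosed C := UCaux.closed_subset_range hd h0 hnct
        (by rintro p ⟨⟨k, rfl⟩, -⟩; exact ⟨ψ k, rfl⟩)
      have hdisj : Disjoint C ({z} : Set X) := by
        rw [Set.disjoint_singleton_right]
        rintro ⟨-, hne⟩
        exact hne rfl
      obtain ⟨f, hf0, hf1, hf01⟩ :=
        exists_continuous_zero_one_of_isClosed hCc isClosed_singleton hdisj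
      have hFC : ForwardContinuous d (f : X → ℝ) := UCaux.fwdCont_of_continuous hd f.continuous
      obtain ⟨δ, hδ, hδf⟩ := hUC f hFC (1/2) (by norm_num)
      obtain ⟨δ', hδ', hδ'f⟩ := hFC z (1/4) (by norm_num)
      obtain ⟨K1, hK1⟩ := hconv δ' hδ'
      have hfin : {k | t (ψ k) = z}.Finite := by
        have h1 : {n | t n = z}.Finite := UCaux.value_finite hd hnct z
        exact Set.Finite.preimage (Set.injOn_of_injective hψ.injective) h1
      obtain ⟨K2, hK2⟩ := hfin.bddAbove
      obtain ⟨K3, hK3⟩ := exists_nat_one_div_lt hδ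
      set k := max (max K1 (K2+1)) K3 with hk
      have hkK1 : K1 ≤ k := le_trans (le_max_left _ _) (le_max_left _ _)
      have hkK2 : K2 + 1 ≤ k := le_trans (le_max_right _ _) (le_max_left _ _)
      have hkK3 : K3 ≤ k := le_max_right _ _
      have hne_z : t (ψ k) ≠ z := by
        intro heq
        have : k ≤ K2 := hK2 heq
        omega
      have hfa : f (t (ψ k)) = 0 := hf0 ⟨⟨k, rfl⟩, hne_z⟩
      have hfb : (3:ℝ)/4 < f (u (ψ k)) := by
        have h1 := hδ'f (u (ψ k)) (hK1 k hkK1)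
        have h2 : f z = 1 := hf1 rfl
        rw [h2] at h1
        have := abs_lt.mp h1
        linarith [this.1]
      have hdab : d (t (ψ k)) (u (ψ k)) < δ := by
        have h1 := hu2 (ψ k)
        have h2 : (1:ℝ)/(ψ k + 1) ≤ 1/(k+1) := UCaux.one_div_succ_le (hψ.le_apply)
        have h3 : (1:ℝ)/(k+1) ≤ 1/(K3+1) := UCaux.one_div_succ_le hkK3
        linarith
      have := hδf _ _ hdab
      rw [hfa] at this
      have := abs_lt.mp this
      linarith [this.1]
    · -- Case 2 : u has no cluster point
      push_neg at hcy
      have key : ∀ F : Finset ℕ, ∃ n, (∀ m ∈ F, m < n) ∧ (∀ m ∈ F, u n ≠ t m) ∧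
          (∀ m ∈ F, t n ≠ u m) := by
        intro F
        have h1 : {n | u n ∈ (t '' ↑F)}.Finite :=
          UCaux.mem_finite hd hcy (F.finite_toSet.image t)
        have h2 : {n | t n ∈ (u '' ↑F)}.Finite :=
          UCaux.mem_finite hd hnct (F.finite_toSet.image u)
        obtain ⟨N, hNub⟩ := ((h1.union h2).union F.finite_toSet).bddAbove
        refine ⟨N+1, ?_, ?_, ?_⟩
        · intro m hm
          have : m ≤ N := hNub (Or.inr hm)
          omega
        · intro m hm heq
          have : N+1 ≤ N := hNub (Or.inl (Or.inl ⟨m, hm, heq.symm⟩))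
          omega
        · intro m hm heq
          have : N+1 ≤ N := hNub (Or.inl (Or.inr ⟨m, hm, heq.symm⟩))
          omega
      set Fs : ℕ → Finset ℕ := fun k =>
        Nat.rec (∅ : Finset ℕ) (fun _ ih => insert (key ih).choose ih) k with hFs
      set φ : ℕ → ℕ := fun k => (key (Fs k)).choose with hφdef
      have hstep : ∀ k, Fs (k+1) = insert (φ k) (Fs k) := fun k => rfl
      have hmem : ∀ k, φ k ∈ Fs (k+1) := fun k => by rw [hstep]; exact Finset.mem_insert_self _ _
      have hsub : ∀ j k, j ≤ k → Fs j ⊆ Fs k := by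
        intro j k hjk
        induction k with
        | zero => rw [Nat.le_zero.mp hjk]
        | succ k ih =>
          rcases Nat.lt_or_ge j (k+1) with h' | h'
          · rw [hstep]
            exact (ih (Nat.lt_succ_iff.mp h')).trans (Finset.subset_insert _ _)
          · rw [Nat.le_antisymm hjk h']
      have hlt : ∀ k, ∀ m ∈ Fs k, m < φ k := fun k => (key (Fs k)).choose_spec.1
      have hφmono : StrictMono φ := by
        intro j k hjk
        exact hlt k (φ j) (hsub (j+1) k hjk (hmem j))
      have hne_tu : ∀ j k, t (φ j) ≠ u (φ k) := by
        intro j k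
        rcases lt_trichotomy j k with h' | h' | h'
        · exact fun heq => (key (Fs k)).choose_spec.2.1 (φ j) (hsub (j+1) k h' (hmem j)) heq.symm
        · rw [h']; exact fun heq => hu1 (φ k) heq.symm
        · exact (key (Fs j)).choose_spec.2.2 (φ k) (hsub (k+1) j h' (hmem k))
      set C : Set X := Set.range (t ∘ φ) with hC
      set D : Set X := Set.range (u ∘ φ) with hD
      have hCc : IsClosed C := UCaux.closed_subset_range hd h0 hnct
        (by rintro p ⟨k, rfl⟩; exact ⟨φ k, rfl⟩)
      have hDc : IsClosed D := UCaux.closed_subset_range hd h0 hcy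
        (by rintro p ⟨k, rfl⟩; exact ⟨φ k, rfl⟩)
      have hdisj : Disjoint C D := by
        rw [Set.disjoint_left]
        rintro p ⟨j, rfl⟩ ⟨k, hk⟩
        exact hne_tu j k hk.symm
      obtain ⟨f, hf0, hf1, hf01⟩ := exists_continuous_zero_one_of_isClosed hCc hDc hdisj
      have hFC : ForwardContinuous d (f : X → ℝ) := UCaux.fwdCont_of_continuous hd f.continuous
      obtain ⟨δ, hδ, hδf⟩ := hUC f hFC (1/2) (by norm_num)
      obtain ⟨K3, hK3⟩ := exists_nat_one_div_lt hδ
      have hdab : d (t (φ K3)) (u (φ K3)) < δ := by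
        have h1 := hu2 (φ K3)
        have h2 : (1:ℝ)/(φ K3 + 1) ≤ 1/(K3+1) := UCaux.one_div_succ_le (hφmono.le_apply)
        linarith
      have hfa : f (t (φ K3)) = 0 := hf0 ⟨K3, rfl⟩
      have hfb : f (u (φ K3)) = 1 := hf1 ⟨K3, rfl⟩
      have := hδf _ _ hdab
      rw [hfa, hfb] at this
      norm_num at this
  · -- cluster condition → UC
    intro hcond f hf ε hε
    by_contra hno
    push_neg at hno
    have hxy : ∀ n : ℕ, ∃ x y : X, d x y < 1/(n+1) ∧ ε ≤ |f x - f y| := by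
      intro n
      obtain ⟨x, y, h1, h2⟩ := hno (1/(n+1)) (UCaux.one_div_succ_pos n)
      exact ⟨x, y, h1, h2⟩
    choose a b hab1 hab2 using hxy
    have hiso : ∀ ε' > (0:ℝ), ∃ N, ∀ n ≥ N, isolation d (a n) < ε' := by
      intro ε' hε'
      obtain ⟨K, hK⟩ := exists_nat_one_div_lt hε'
      refine ⟨K, fun n hn => ?_⟩
      have hne : b n ≠ a n := by
        intro h
        have h2 := hab2 n
        rw [h, sub_self, abs_zero] at h2
        linarith
      have hle : isolation d (a n) ≤ d (a n) (b n) := by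
        apply csInf_le
        · exact ⟨0, by rintro r ⟨y, -, rfl⟩; exact hd.nonneg _ _⟩
        · exact ⟨b n, hne, rfl⟩
      calc isolation d (a n) ≤ d (a n) (b n) := hle
        _ < 1/(n+1) := hab1 n
        _ ≤ 1/(K+1) := UCaux.one_div_succ_le hn
        _ < ε' := hK
    obtain ⟨x, φ, hφ, hconv⟩ := hcond a hiso
    obtain ⟨δ, hδ, hδf⟩ := hf x (ε/2) (half_pos hε)
    obtain ⟨K1, hK1⟩ := hconv (δ/2) (half_pos hδ)
    obtain ⟨K2, hK2⟩ := exists_nat_one_div_lt (half_pos hδ)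
    set n := max K1 K2 with hn
    have h1 : d x (a (φ n)) < δ/2 := hK1 n (le_max_left _ _)
    have h2 : d x (b (φ n)) < δ := by
      have h3 := hd.triangle x (b (φ n)) (a (φ n))
      have h4 := hab1 (φ n)
      have h5 : (1:ℝ)/(φ n + 1) ≤ 1/(n+1) := UCaux.one_div_succ_le (hφ.le_apply)
      have h6 : (1:ℝ)/(n+1) ≤ 1/(K2+1) := UCaux.one_div_succ_le (le_max_right _ _)
      linarith
    have h7 := hδf (a (φ n)) (by linarith)
    have h8 := hδf (b (φ n)) h2
    have h9 := hab2 (φ n)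
    have h10 := abs_sub_le (f (a (φ n))) (f x) (f (b (φ n)))
    rw [abs_sub_comm (f (a (φ n))) (f x)] at h10
    linarith

/-- `(X,d)` is UC iff every sequence whose isolation degrees tend to `0`
has a cluster point. -/
theorem isUC_iff_isolation {X : Type*} (d : X → X → ℝ) (hd : IsQuasiMetric d)
    (hT1 : @T1Space X (forwardTopology d))
    (hN : @NormalSpace X (forwardTopology d)) :
    IsUC d ↔
      ∀ s : ℕ → X, (∀ ε > (0:ℝ), ∃ N : ℕ, ∀ n ≥ N, isolation d (s n) < ε) →
        ∃ x : X, IsClusterPointOf d s x :=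
  isUC_iff_isolation' d hd hT1 hN
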